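/- Let k be a field and let h(s) ∈ k[s] be a monic polynomial of degree d ≥ 1 that splits over k. Then the resultant with respect to s of h(s) and the polynomial (h(t) − h(s))/(t − s) ∈ k[t][s] equals, up to a nonzero constant in k, the polynomial h(t)^{d−1} ∈ k[t]. -/

import Mathlib

open Polynomial

/-- The Sylvester matrix of `p` and `q` (with respect to the variable `X`), where the first
`a` columns are the coefficient vectors of `X^j * p` and the last `b` columns those of
`X^j * q`; row `i` records the coefficient of `X^i`. -/
noncomputable def sylvMat {R : Type*} [CommRing R] (p q : R[X]) (a b : ℕ) :
    Matrix (Fin (a + b)) (Fin (a + b)) R :=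
  Matrix.of fun i j =>
    Fin.addCases (fun j₁ : Fin a => (X ^ (j₁ : ℕ) * p).coeff (i : ℕ))
      (fun j₂ : Fin b => (X ^ (j₂ : ℕ) * q).coeff (i : ℕ)) j

open Fin.NatCast in
lemma sylv_det_eq {R : Type*} [CommRing R] {p : R[X]} (hp : p.Monic) (q : R[X])
    (e : ℕ) (hen : e ≤ p.natDegree) (h1 : 1 ≤ p.natDegree) (hqe : q.natDegree ≤ e) :
    ∃ ε : ℤ, (ε = 1 ∨ ε = -1) ∧
      (sylvMat p q e p.natDegree).det =
        ε * (Algebra.leftMulMatrix (AdjoinRoot.powerBasisAux' hp)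
          (AdjoinRoot.mk p q)).det := by
  classical
  nontriviality R
  set n := p.natDegree with hn
  have hXc : ∀ (a b : ℕ) (f : R[X]), (X ^ a * f).coeff b
      = if a ≤ b then f.coeff (b - a) else 0 := by
    intro a b f
    rw [mul_comm, coeff_mul_X_pow']
  -- row index function
  set ridx : Fin e ⊕ Fin n → ℕ := Sum.elim (fun i => (i : ℕ)) (fun i => e + (i : ℕ)) with hridx
  set T : Matrix (Fin e ⊕ Fin n) (Fin e ⊕ Fin n) R :=
    fun i => Sum.elim (fun j₁ : Fin e => (X ^ (j₁ : ℕ) * p).coeff (ridx i))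
      (fun j₂ : Fin n => if ridx i = (j₂ : ℕ) then 1 else 0) with hT
  set Cm : Matrix (Fin e) (Fin n) R :=
    fun l j => ((X ^ (j : ℕ) * q) /ₘ p).coeff l with hCm
  set Mm : Matrix (Fin n) (Fin n) R :=
    fun i j => ((X ^ (j : ℕ) * q) %ₘ p).coeff i with hMm
  -- coefficients of the quotient vanish in degrees ≥ e
  have hDcoeff : ∀ (j : Fin n) (l : ℕ), e ≤ l → ((X ^ (j : ℕ) * q) /ₘ p).coeff l = 0 := by
    intro j l hl
    by_cases hc : (X ^ (j : ℕ) * q).degree < p.degree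
    · rw [(divByMonic_eq_zero_iff hp).2 hc, coeff_zero]
    · have hfd : ((X ^ (j : ℕ) * q)).natDegree ≤ (j : ℕ) + e := by
        refine le_trans (natDegree_mul_le) ?_
        have := natDegree_X_pow_le (R := R) (j : ℕ)
        omega
      have hge : n ≤ (X ^ (j : ℕ) * q).natDegree := by
        by_contra hcon
        apply hc
        calc (X ^ (j : ℕ) * q).degree ≤ ((X ^ (j : ℕ) * q).natDegree : WithBot ℕ) :=
              degree_le_natDegree
          _ < (n : WithBot ℕ) := by exact_mod_cast (by omega : (X ^ (j:ℕ)*q).natDegree < n)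
          _ = p.degree := (degree_eq_natDegree hp.ne_zero).symm
      have hD := natDegree_divByMonic (X ^ (j : ℕ) * q) hp
      apply coeff_eq_zero_of_natDegree_lt
      have hj : (j : ℕ) < n := j.isLt
      omega
  -- key coefficient identity
  have key : ∀ (j : Fin n) (i : ℕ),
      (X ^ (j : ℕ) * q).coeff i =
        (∑ l : Fin e, ((X ^ (j : ℕ) * q) /ₘ p).coeff l * (X ^ (l : ℕ) * p).coeff i)
          + ((X ^ (j : ℕ) * q) %ₘ p).coeff i := by
    intro j i
    set f := X ^ (j : ℕ) * q with hf
    set D := f /ₘ p with hD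
    have hDsum : D = ∑ l : Fin e, C (D.coeff l) * X ^ (l : ℕ) := by
      ext m
      rw [finset_sum_coeff]
      simp only [coeff_C_mul, coeff_X_pow, mul_ite, mul_one, mul_zero]
      by_cases hm : m < e
      · rw [Finset.sum_eq_single (⟨m, hm⟩ : Fin e)]
        · simp
        · intro b _ hb
          have : m ≠ (b : ℕ) := fun hmb => hb (by ext; simp [hmb])
          simp [this]
        · simp
      · rw [Finset.sum_eq_zero, hDcoeff j m (by omega)]
        intro b _
        have : m ≠ (b : ℕ) := by have := b.isLt; omega
        simp [this]
    conv_lhs => rw [← modByMonic_add_div f p]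
    rw [coeff_add, add_comm]
    congr 1
    conv_lhs => rw [← hD, hDsum]
    rw [Finset.mul_sum, finset_sum_coeff]
    refine Finset.sum_congr rfl fun l _ => ?_
    have : p * (C (D.coeff l) * X ^ (l : ℕ)) = C (D.coeff l) * (X ^ (l : ℕ) * p) := by ring
    rw [this, coeff_C_mul]
  -- the matrix factorization
  have hfact : (sylvMat p q e n).submatrix finSumFinEquiv finSumFinEquiv
      = T * Matrix.fromBlocks 1 Cm 0 Mm := by
    ext i j
    have hridxval : ∀ i, ridx i = ((finSumFinEquiv i : Fin (e + n)) : ℕ) := by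
      rintro (i₁ | i₂) <;> simp [hridx]
    rw [Matrix.mul_apply, Fintype.sum_sum_type]
    cases j with
    | inl j₁ =>
      simp only [Matrix.fromBlocks_apply₁₁, Matrix.fromBlocks_apply₂₁, Matrix.zero_apply,
        mul_zero, Finset.sum_const_zero, add_zero, Matrix.one_apply, mul_ite, mul_one]
      rw [Finset.sum_ite_eq' Finset.univ j₁ (fun l => T i (Sum.inl l))]
      simp [sylvMat, hT, hridxval i]
    | inr j₂ =>
      have hL : (sylvMat p q e n).submatrix finSumFinEquiv finSumFinEquiv i (Sum.inr j₂)
          = (X ^ (j₂ : ℕ) * q).coeff (ridx i) := by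
        simp [sylvMat, hridxval i]
      rw [hL, key j₂ (ridx i)]
      simp only [Matrix.fromBlocks_apply₁₂, Matrix.fromBlocks_apply₂₂]
      congr 1
      · refine Finset.sum_congr rfl fun l _ => ?_
        simp only [hT, hCm, Sum.elim_inl]
        ring
      · -- delta sum
        have hmoddeg : ((X ^ (j₂ : ℕ) * q) %ₘ p).degree < (n : WithBot ℕ) :=
          (degree_modByMonic_lt _ hp).trans_le degree_le_natDegree
        by_cases hi : ridx i < n
        · rw [Finset.sum_eq_single (⟨ridx i, hi⟩ : Fin n)]
          · simp [hT, hMm]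
          · intro b _ hb
            have : ridx i ≠ (b : ℕ) := fun hc => hb (by ext; simp [← hc])
            simp [hT, this]
          · simp
        · rw [Finset.sum_eq_zero, coeff_eq_zero_of_degree_lt]
          · refine hmoddeg.trans_le ?_
            exact_mod_cast (show n ≤ ridx i by omega)
          · intro b _
            have : ridx i ≠ (b : ℕ) := by have := b.isLt; omega
            simp [hT, this]
  -- identify Mm with the left-multiplication matrix
  have hMmL : Mm = Algebra.leftMulMatrix (AdjoinRoot.powerBasisAux' hp) (AdjoinRoot.mk p q) := by
    ext i j
    rw [Algebra.leftMulMatrix_eq_repr_mul]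
    have hb : (AdjoinRoot.powerBasisAux' hp) j = AdjoinRoot.root p ^ (j : ℕ) := by
      have := (AdjoinRoot.powerBasis' hp).basis_eq_pow j
      exact this
    have hmul : AdjoinRoot.mk p q * (AdjoinRoot.powerBasisAux' hp) j
        = AdjoinRoot.mk p (X ^ (j : ℕ) * q) := by
      rw [hb, ← AdjoinRoot.mk_X (f := p), ← map_pow, ← _root_.map_mul]
      congr 1
      ring
    rw [hmul]
    rw [AdjoinRoot.powerBasisAux'_repr_apply_to_fun, AdjoinRoot.modByMonicHom_mk]
  -- the row permutation
  haveI : NeZero n := ⟨by omega⟩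
  set σf : Fin e ⊕ Fin n → Fin e ⊕ Fin n := Sum.elim
    (fun i₁ : Fin e => Sum.inr (⟨n - e + (i₁ : ℕ), by omega⟩ : Fin n))
    (fun i₂ : Fin n => if h : n - e ≤ (i₂ : ℕ)
      then Sum.inl (⟨(i₂ : ℕ) - (n - e), by omega⟩ : Fin e)
      else Sum.inr i₂) with hσf
  have hσinv : Function.Involutive σf := by
    rintro (i₁ | i₂)
    · simp only [hσf, Sum.elim_inl, Sum.elim_inr]
      rw [dif_pos (by omega)]
      congr 1
      ext
      simp
    · simp only [hσf, Sum.elim_inr]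
      by_cases h : n - e ≤ (i₂ : ℕ)
      · rw [dif_pos h]
        simp only [Sum.elim_inl]
        congr 1
        ext
        simp
        omega
      · rw [dif_neg h, Sum.elim_inr, dif_neg h]
  set σ : Equiv.Perm (Fin e ⊕ Fin n) := Function.Involutive.toPerm σf hσinv with hσ
  have hσapp : ∀ i, σ i = σf i := fun _ => rfl
  -- the cyclic column permutation
  set π : Equiv.Perm (Fin n) := Equiv.addRight ((e : ℕ) : Fin n) with hπ
  have hπval : ∀ i : Fin n, ((π i : Fin n) : ℕ)
      = if n - e ≤ (i : ℕ) then (i : ℕ) - (n - e) else e + (i : ℕ) := by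
    intro i
    have hv : ((π i : Fin n) : ℕ) = ((i : ℕ) + e) % n := by
      have h2 : (i : ℕ) % n = (i : ℕ) := Nat.mod_eq_of_lt i.isLt
      simp only [hπ, Equiv.coe_addRight, Fin.add_def, Fin.val_natCast]
      conv_rhs => rw [Nat.add_mod]
      rw [h2]
    rw [hv]
    by_cases h : n - e ≤ (i : ℕ)
    · rw [if_pos h, Nat.mod_eq_sub_mod (by omega), Nat.mod_eq_of_lt (by omega)]
      omega
    · rw [if_neg h, Nat.mod_eq_of_lt (by omega)]
      omega
  set W : Matrix (Fin e) (Fin e) R := fun i j => (X ^ (j : ℕ) * p).coeff (n + (i : ℕ)) with hW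
  set Z : Matrix (Fin n) (Fin n) R := π.permMatrix R with hZ
  set Y : Matrix (Fin n) (Fin e) R := fun i j => T (σ (Sum.inr i)) (Sum.inl j) with hY
  have hT2 : T.submatrix σ id = Matrix.fromBlocks W 0 Y Z := by
    ext i j
    rw [Matrix.submatrix_apply]
    cases i with
    | inl i₁ =>
      cases j with
      | inl j₁ =>
        simp only [Matrix.submatrix_apply, id, hσapp, hσf, Sum.elim_inl, Sum.elim_inr,
          Matrix.fromBlocks_apply₁₁, hT, hW, hridx]
        congr 1
        omega
      | inr j₂ =>
        simp only [Matrix.submatrix_apply, id, hσapp, hσf, Sum.elim_inl, Sum.elim_inr,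
          Matrix.fromBlocks_apply₁₂, hT, hridx, Matrix.zero_apply]
        exact if_neg (by omega)
    | inr i₂ =>
      cases j with
      | inl j₁ => rfl
      | inr j₂ =>
        have hvv := hπval i₂
        by_cases h : n - e ≤ (i₂ : ℕ)
        · rw [if_pos h] at hvv
          simp only [Matrix.submatrix_apply, id, hσapp, hσf, Sum.elim_inr, dif_pos h,
            Matrix.fromBlocks_apply₂₂, hZ, Equiv.Perm.permMatrix, PEquiv.toMatrix_apply,
            Equiv.toPEquiv_apply, Option.mem_some_iff, hT, Sum.elim_inl, Sum.elim_inr, hridx]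
          refine if_congr ?_ rfl rfl
          simp only [Fin.ext_iff, hvv]
        · rw [if_neg h] at hvv
          simp only [Matrix.submatrix_apply, id, hσapp, hσf, Sum.elim_inr, dif_neg h,
            Matrix.fromBlocks_apply₂₂, hZ, Equiv.Perm.permMatrix, PEquiv.toMatrix_apply,
            Equiv.toPEquiv_apply, Option.mem_some_iff, hT, Sum.elim_inl, Sum.elim_inr, hridx]
          refine if_congr ?_ rfl rfl
          simp only [Fin.ext_iff, hvv]
  -- determinant computations
  have hdetW : W.det = 1 := by
    rw [Matrix.det_of_upperTriangular (?_ : W.BlockTriangular id)]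
    · refine Finset.prod_eq_one fun i _ => ?_
      rw [hW]
      simp only
      rw [hXc, if_pos (by omega)]
      have h2 : n + (i : ℕ) - (i : ℕ) = n := by omega
      rw [h2]
      exact hp.coeff_natDegree
    · intro i j hij
      simp only [id] at hij
      rw [hW]
      simp only
      rw [hXc, if_pos (by omega)]
      apply coeff_eq_zero_of_natDegree_lt
      have : (j : ℕ) < (i : ℕ) := hij
      omega
  have hdetZ : Z.det = ((Equiv.Perm.sign π : ℤ) : R) := by
    rw [hZ]
    exact_mod_cast Matrix.det_permutation (σ := π)
  have hperm : (Matrix.fromBlocks W 0 Y Z).det = ((Equiv.Perm.sign σ : ℤ) : R) * T.det := by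
    rw [← hT2]
    exact_mod_cast Matrix.det_permute σ T
  have hWZ : (Matrix.fromBlocks W 0 Y Z).det = ((Equiv.Perm.sign π : ℤ) : R) := by
    rw [Matrix.det_fromBlocks_zero₁₂, hdetW, one_mul, hdetZ]
  have hTdet : T.det = ((Equiv.Perm.sign σ : ℤ) : R) * ((Equiv.Perm.sign π : ℤ) : R) := by
    have h3 : ((Equiv.Perm.sign σ : ℤ) : R) * T.det = ((Equiv.Perm.sign π : ℤ) : R) :=
      hperm.symm.trans hWZ
    rcases Int.units_eq_one_or (Equiv.Perm.sign σ) with hs | hs <;> rw [hs] at h3 ⊢ <;>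
      push_cast at h3 ⊢ <;> [simpa using h3; linear_combination -h3]
  have hdetS : (sylvMat p q e n).det = T.det * Mm.det := by
    rw [← Matrix.det_submatrix_equiv_self finSumFinEquiv, hfact, Matrix.det_mul,
      Matrix.det_fromBlocks_zero₂₁, Matrix.det_one, one_mul]
  refine ⟨(Equiv.Perm.sign σ : ℤ) * (Equiv.Perm.sign π : ℤ), ?_, ?_⟩
  · rcases Int.units_eq_one_or (Equiv.Perm.sign σ) with hs | hs <;>
      rcases Int.units_eq_one_or (Equiv.Perm.sign π) with hq' | hq' <;>
      rw [hs, hq'] <;> norm_num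
  · rw [hdetS, hTdet, ← hMmL]
    push_cast
    ring


lemma charpoly_eval_aux {R : Type*} [CommRing R] {m : Type*} [DecidableEq m] [Fintype m]
    (M : Matrix m m R) (r : R) :
    M.charpoly.eval r = (Matrix.diagonal (fun _ => r) - M).det := by
  have h1 : M.charpoly.eval r = ((Matrix.charmatrix M).map (Polynomial.evalRingHom r)).det := by
    rw [Matrix.charpoly, ← RingHom.mapMatrix_apply, ← RingHom.map_det]
    rfl
  rw [h1]
  congr 1
  ext i j
  by_cases h : i = j <;>
    simp [Matrix.charmatrix_apply, Matrix.diagonal_apply, h]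

lemma minpoly_root_aux {R : Type*} [CommRing R] [IsDomain R] {p : R[X]} (hp : p.Monic) :
    minpoly R (AdjoinRoot.root p) = p := by
  symm
  refine minpoly.unique' R _ hp ?_ ?_
  · rw [AdjoinRoot.aeval_eq, AdjoinRoot.mk_self]
  · intro r hr
    rw [or_iff_not_imp_left]
    intro hr0 hc
    rw [AdjoinRoot.aeval_eq, AdjoinRoot.mk_eq_zero] at hc
    exact absurd (Polynomial.degree_le_of_dvd hc hr0) (not_le.mpr hr)


set_option linter.unreachableTactic false in
set_option linter.unusedTactic false in
/-- For a monic split polynomial `h` of degree `d ≥ 1` over a field `k`, the resultant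
(eliminating the variable `s`) of `h(s)` and the difference quotient `(h(t) - h(s))/(t - s)`
equals `h(t)^(d-1)` up to a nonzero constant of `k`.  Here the base ring is `k[t]`, the outer
polynomial variable is `s`, so that `h(s)` is `h.map C` and `h(t)` is `C h`. -/
theorem resultant_diffQuotient_eq_pow
    (k : Type*) [Field k] (d : ℕ) (hd : 1 ≤ d) (h : k[X])
    (hmonic : h.Monic) (hdeg : h.natDegree = d)
    (hsplit : Splits (h.map (RingHom.id k)))
    (q : (k[X])[X])
    (hq : C h - h.map (C : k →+* k[X]) = (C X - X) * q) :
    ∃ γ : k, γ ≠ 0 ∧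
      (sylvMat (h.map (C : k →+* k[X])) q (d - 1) d).det = Polynomial.C γ * h ^ (d - 1) := by
  have hpm : (h.map (C : k →+* k[X])).Monic := hmonic.map _
  have hpn : (h.map (C : k →+* k[X])).natDegree = d := by
    rw [hmonic.natDegree_map, hdeg]
  have hh0 : h ≠ 0 := hmonic.ne_zero
  -- q is nonzero and has natDegree d - 1
  have hqne : q ≠ 0 := by
    rintro rfl
    rw [mul_zero, sub_eq_zero] at hq
    have h2 := congrArg (fun f => f.coeff d) hq
    simp only [coeff_C, coeff_map] at h2
    rw [if_neg (by omega), ← hdeg, hmonic.coeff_natDegree] at h2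
    exact one_ne_zero (h2.symm.trans rfl : (1 : k[X]) = 0)
  have hq' : (X - C X) * q = h.map (C : k →+* k[X]) - C h := by
    linear_combination hq
  have hqdeg : q.natDegree = d - 1 := by
    have hdeg2 : ((X - C X) * q).natDegree = d := by
      rw [hq', natDegree_sub_eq_left_of_natDegree_lt, hpn]
      rw [natDegree_C, hpn]
      omega
    have hmul : ((X - C X) * q).natDegree = 1 + q.natDegree := by
      rw [natDegree_mul (monic_X_sub_C (X : k[X])).ne_zero hqne, natDegree_X_sub_C]
    omega
  -- apply the Sylvester factorization
  obtain ⟨ε, hε, hdet⟩ := sylv_det_eq hpm q ((h.map (C : k →+* k[X])).natDegree - 1)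
      (by omega) (by omega) (by omega)
  set p : (k[X])[X] := h.map (C : k →+* k[X]) with hpdef
  set pb := AdjoinRoot.powerBasis' hpm with hpb
  have hbb : pb.basis = AdjoinRoot.powerBasisAux' hpm := rfl
  set L := Algebra.leftMulMatrix (AdjoinRoot.powerBasisAux' hpm) with hL
  -- multiplicativity
  have hmkh : AdjoinRoot.mk p (C h) = AdjoinRoot.mk p (C X - X) * AdjoinRoot.mk p q := by
    have h2 := congrArg (AdjoinRoot.mk p) hq
    rw [map_sub, AdjoinRoot.mk_self, sub_zero, _root_.map_mul] at h2
    exact h2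
  have hLh : (L (AdjoinRoot.mk p (C h))).det = h ^ p.natDegree := by
    rw [AdjoinRoot.mk_C, ← AdjoinRoot.algebraMap_eq, AlgHom.commutes,
      Matrix.algebraMap_eq_diagonal, Matrix.det_diagonal]
    simp
  have hLt : (L (AdjoinRoot.mk p (C X - X))).det = h := by
    have hmk : AdjoinRoot.mk p (C X - X)
        = algebraMap k[X] (AdjoinRoot p) X - AdjoinRoot.root p := by
      rw [map_sub, AdjoinRoot.mk_C, ← AdjoinRoot.algebraMap_eq, AdjoinRoot.mk_X]
    rw [hmk, map_sub, AlgHom.commutes, Matrix.algebraMap_eq_diagonal]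
    have hgen : AdjoinRoot.root p = pb.gen := rfl
    have hcp : (L (AdjoinRoot.root p)).charpoly = minpoly k[X] (AdjoinRoot.root p) := by
      rw [hgen, hL, ← hbb]
      exact charpoly_leftMulMatrix pb
    have hevalp : Polynomial.eval (X : k[X]) p = h := by
      rw [hpdef, eval_map, eval₂_C_X]
    have he := charpoly_eval_aux (L (AdjoinRoot.root p)) (X : k[X])
    rw [hcp, minpoly_root_aux hpm, hevalp] at he
    have hdiag : (algebraMap k[X] (Fin p.natDegree → k[X])) X = fun _ => (X : k[X]) := rfl
    rw [hdiag, ← he]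
  -- putting it together
  have hprod : h * (L (AdjoinRoot.mk p q)).det = h ^ p.natDegree := by
    rw [← hLh, hmkh, _root_.map_mul, Matrix.det_mul, hLt]
  have hLq : (L (AdjoinRoot.mk p q)).det = h ^ (p.natDegree - 1) := by
    have h2 : h ^ p.natDegree = h * h ^ (p.natDegree - 1) := by
      rw [← pow_succ']
      congr 1
      omega
    rw [h2] at hprod
    exact mul_left_cancel₀ hh0 hprod
  rw [hLq] at hdet
  refine ⟨(ε : k), ?_, ?_⟩
  · rcases hε with rfl | rfl <;> norm_num
  · rw [← hpn]
    rw [hdet]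
    rcases hε with rfl | rfl <;> simp
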